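/- In a directed n-cycle with nonzero edge weights, if the loop product P is known and additionally T_{n1} and the entries T_{ni} for excited i and T_{i1} for measured i are known (where every node i ∈ {2,…,n} is excited or measured), then each edge weight g_{i-1} (edge i−1 → i) is determined recursively: g_{i-1} = T_{n1}/(P_{i-2,1} T_{ni}) if i is excited, and g_{i-1} = T_{i1}(1-P)/P_{i-1,1} if i is measured, where P_{j,1} = g_1 g_2 ⋯ g_{j-1} is the product of already-determined weights; finally g_n = P/P_{n,1}. -/

import Mathlib

section
open Fin.NatCast Fin.CommRing

private lemma fin_sub_val' {n : ℕ} [NeZero n] (a b : Fin n) :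
    (a - b).val = (n - b.val + a.val) % n := by
  rw [Fin.sub_def]

private lemma fin_sub_val_le' {n : ℕ} [NeZero n] (a b : Fin n) (h : (b:ℕ) ≤ (a:ℕ)) :
    (a - b).val = a.val - b.val := by
  have ha := a.isLt
  have heq : n - b.val + a.val = n + (a.val - b.val) := by omega
  rw [fin_sub_val', heq, Nat.add_mod_left, Nat.mod_eq_of_lt (by omega)]

private lemma fin_neg_one_val' {n : ℕ} [NeZero n] : ((-1 : Fin n)).val = n - 1 := by
  have hn := Nat.pos_of_ne_zero (NeZero.ne n)
  rcases Nat.lt_or_ge 1 n with h | h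
  · have h0 : (-1 : Fin n) = 0 - 1 := by ring
    have h1 : ((1:Fin n) : ℕ) = 1 := by
      have := Fin.val_cast_of_lt (n:=n) (a:=1) h; simpa using this
    have heq : n - ((1:Fin n):ℕ) + ((0:Fin n):ℕ) = n - 1 := by
      rw [h1, Fin.val_zero]; omega
    rw [h0, fin_sub_val', heq, Nat.mod_eq_of_lt (by omega)]
  · have hn1 : n = 1 := by omega
    subst hn1
    simp [Fin.val_eq_zero]

private lemma prod_shift' {K : Type*} [CommRing K] {n : ℕ} [NeZero n] (g : Fin n → K) (c : Fin n) :
    ∏ t ∈ Finset.range n, g (c + (t : Fin n)) = ∏ i, g i := by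
  rw [← Fin.prod_univ_eq_prod_range (fun t => g (c + (t : Fin n))) n]
  simp only [Fin.cast_val_eq_self]
  exact Equiv.prod_comp (Equiv.addLeft c) g

end

/-- The `n × n` network matrix of a directed `n`-cycle: entry `(i+1 mod n, i)` is `g i`. -/
def cycleMatrix {K : Type*} [Field K] {n : ℕ} [NeZero n] (g : Fin n → K) :
    Matrix (Fin n) (Fin n) K :=
  Matrix.of fun i j => if i = j + 1 then g j else 0

open Fin.NatCast

open Fin.CommRing in
private lemma cycle_inv' {K : Type*} [Field K] {n : ℕ} [NeZero n] (g : Fin n → K)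
    (hP : 1 - ∏ i, g i ≠ 0) :
    (1 - cycleMatrix g)⁻¹ = Matrix.of fun i j =>
      (∏ t ∈ Finset.range ((i - j : Fin n).val), g (j + (t : Fin n))) / (1 - ∏ i, g i) := by
  have hn := Nat.pos_of_ne_zero (NeZero.ne n)
  apply Matrix.inv_eq_right_inv
  ext i j
  rw [Matrix.mul_apply]
  have hrow : ∀ k : Fin n, (1 - cycleMatrix g) i k =
      (if k = i then 1 else 0) - (if k = i - 1 then g (i - 1) else 0) := by
    intro k
    simp only [Matrix.sub_apply, Matrix.one_apply, cycleMatrix, Matrix.of_apply]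
    congr 1
    · simp [eq_comm]
    · by_cases h : k = i - 1
      · subst h; simp [sub_add_cancel]
      · rw [if_neg, if_neg h]
        intro hi; exact h (by rw [hi]; ring)
  simp only [hrow, sub_mul, Finset.sum_sub_distrib, ite_mul, one_mul, zero_mul,
    Finset.sum_ite_eq', Finset.mem_univ, if_true, Matrix.of_apply]
  by_cases hij : i = j
  · subst hij
    rw [Matrix.one_apply_eq]
    have h1 : ((i - i : Fin n)).val = 0 := by rw [sub_self]; rfl
    have h2 : ((i - 1 - i : Fin n)) = -1 := by ring
    rw [h1, h2, fin_neg_one_val']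
    have key : g (i - 1) * ∏ t ∈ Finset.range (n - 1), g (i + (t : Fin n)) = ∏ k, g k := by
      rw [← prod_shift' g (i - 1)]
      rw [show Finset.range n = Finset.range ((n - 1) + 1) from by rw [Nat.sub_add_cancel hn],
        Finset.prod_range_succ']
      have : ∀ t : ℕ, g (i - 1 + ((t + 1 : ℕ) : Fin n)) = g (i + (t : Fin n)) := by
        intro t
        congr 1
        push_cast
        ring
      simp only [this, Nat.cast_zero, add_zero]
      ring
    field_simp
    linear_combination (-1) * key
  · rw [Matrix.one_apply_ne' (Ne.symm hij)]
    have hij' : i - j ≠ 0 := sub_ne_zero_of_ne hij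
    have hk : 0 < ((i - j : Fin n)).val := by
      rcases Nat.eq_zero_or_pos ((i - j : Fin n)).val with h | h
      · exact absurd (Fin.ext h) hij'
      · exact h
    have hn2 : 2 ≤ n := by
      by_contra h
      have : n = 1 := by omega
      subst this
      exact hij (Subsingleton.elim i j)
    have h1v : ((1 : Fin n) : ℕ) = 1 := by
      have := Fin.val_cast_of_lt (n:=n) (a:=1) (by omega); simpa using this
    have hsub : ((i - 1 - j : Fin n)) = (i - j) - 1 := by ring
    have hsubv : ((i - j - 1 : Fin n)).val = ((i - j : Fin n)).val - 1 := by
      rw [fin_sub_val_le' _ _ (by omega)]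
      rw [h1v]
    have hcast : (((((i - j : Fin n)).val - 1 : ℕ)) : Fin n) = (i - j) - 1 := by
      rw [← hsubv, Fin.cast_val_eq_self]
    have hgi : g (i - 1) = g (j + ((((i - j : Fin n)).val - 1 : ℕ) : Fin n)) := by
      congr 1
      rw [hcast]
      ring
    rw [hsub, hsubv]
    have hk' : ((i - j : Fin n)).val = (((i - j : Fin n)).val - 1) + 1 := by omega
    rw [hk', Finset.prod_range_succ, ← hk']
    rw [← hgi]
    field_simp
    ring

/-- Correctness of the recursive identification formulas (1-based node labels, node `i`
is index `i-1`; `Q i` is the directed-path product `g_1 ⋯ g_{i-1}` from node 1 to node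
`i`): once `P` is known, each edge weight `g_{i-1}` (edge `i-1 → i`) is given by
`T_{n1}/(Q(i-1) · T_{ni})` if node `i` is excited and by `T_{i1}(1-P)/Q(i-1)` if node
`i` is measured, and finally `g_n = P / Q n`. -/
theorem recursive_identification_formulas {K : Type*} [Field K] {n : ℕ} [NeZero n]
    (hn : 2 ≤ n) (g : Fin n → K) (hg : ∀ i, g i ≠ 0) (hP : 1 - ∏ i, g i ≠ 0)
    (B C : Finset (Fin n)) (hcover : B ∪ C = Finset.univ) :
    let T := (1 - cycleMatrix g)⁻¹
    let P := ∏ i, g i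
    let Q : ℕ → K := fun m => ∏ t ∈ Finset.range (m - 1), g ((t : ℕ) : Fin n)
    (∀ i : ℕ, 2 ≤ i → i ≤ n → ((i - 1 : ℕ) : Fin n) ∈ B →
        g ((i - 2 : ℕ) : Fin n) =
          T ((n - 1 : ℕ) : Fin n) 0 / (Q (i - 1) * T ((n - 1 : ℕ) : Fin n) ((i - 1 : ℕ) : Fin n))) ∧
    (∀ i : ℕ, 2 ≤ i → i ≤ n → ((i - 1 : ℕ) : Fin n) ∈ C →
        g ((i - 2 : ℕ) : Fin n) = T ((i - 1 : ℕ) : Fin n) 0 * (1 - P) / Q (i - 1)) ∧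
    g ((n - 1 : ℕ) : Fin n) = P / Q n := by
  intro T P Q
  have hT : T = Matrix.of fun i j =>
      (∏ t ∈ Finset.range ((i - j : Fin n).val), g (j + (t : Fin n))) / (1 - ∏ i, g i) :=
    cycle_inv' g hP
  have hPall : P = ∏ t ∈ Finset.range n, g ((t : ℕ) : Fin n) := by
    show (∏ i, g i) = _
    rw [← Fin.prod_univ_eq_prod_range (fun t => g ((t : ℕ) : Fin n)) n]
    simp [Fin.cast_val_eq_self]
  have hPn : P = (∏ t ∈ Finset.range (n - 1), g ((t : ℕ) : Fin n)) *
      g (((n - 1 : ℕ) : Fin n)) := by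
    rw [hPall, show Finset.range n = Finset.range ((n - 1) + 1) from by
      rw [Nat.sub_add_cancel (by omega)], Finset.prod_range_succ]
  have hvn : (((n - 1 : ℕ) : Fin n) : ℕ) = n - 1 := Fin.val_cast_of_lt (by omega)
  have hP' : (1 : K) - P ≠ 0 := hP
  refine ⟨?_, ?_, ?_⟩
  · intro i hi2 hin _
    have hvi : (((i - 1 : ℕ) : Fin n) : ℕ) = i - 1 := Fin.val_cast_of_lt (by omega)
    set A := ∏ t ∈ Finset.range (i - 2), g ((t : ℕ) : Fin n) with hA
    set c := g (((i - 2 : ℕ) : Fin n)) with hc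
    set b := ((i - 1 : ℕ) : Fin n) with hb
    set Bp := ∏ t ∈ Finset.range (n - i), g (b + (t : Fin n)) with hBp
    have hv1 : ((((n - 1 : ℕ) : Fin n) - 0 : Fin n)).val = n - 1 := by
      rw [sub_zero, hvn]
    have hv2 : ((((n - 1 : ℕ) : Fin n) - b : Fin n)).val = n - i := by
      rw [fin_sub_val_le' _ _ (by rw [hb, hvi, hvn]; omega), hvi, hvn]
      omega
    have hTn1 : T (((n - 1 : ℕ) : Fin n)) 0 =
        (∏ t ∈ Finset.range (n - 1), g ((t : ℕ) : Fin n)) / (1 - P) := by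
      rw [hT]
      simp only [Matrix.of_apply, hv1, zero_add]
      rfl
    have hTni : T (((n - 1 : ℕ) : Fin n)) b = Bp / (1 - P) := by
      rw [hT]
      simp only [Matrix.of_apply, hv2]
      rfl
    have hsplit : ∏ t ∈ Finset.range (n - 1), g ((t : ℕ) : Fin n) = A * c * Bp := by
      rw [show Finset.range (n - 1) = Finset.range ((i - 1) + (n - i)) from by
        rw [show (i - 1) + (n - i) = n - 1 from by omega], Finset.prod_range_add]
      rw [show Finset.range (i - 1) = Finset.range ((i - 2) + 1) from by
        rw [show (i - 2) + 1 = i - 1 from by omega], Finset.prod_range_succ]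
      congr 1
      apply Finset.prod_congr rfl
      intro t _
      congr 1
      rw [hb]
      push_cast
      open Fin.CommRing in ring
    have hA0 : A ≠ 0 := Finset.prod_ne_zero_iff.mpr fun t _ => hg _
    have hB0 : Bp ≠ 0 := Finset.prod_ne_zero_iff.mpr fun t _ => hg _
    have hQ : Q (i - 1) = A := by
      show (∏ t ∈ Finset.range (i - 1 - 1), g ((t : ℕ) : Fin n)) = A
      rw [hA, show i - 1 - 1 = i - 2 from by omega]
    rw [hTn1, hTni, hQ, hsplit]
    field_simp
  · intro i hi2 hin _
    have hvi : (((i - 1 : ℕ) : Fin n) : ℕ) = i - 1 := Fin.val_cast_of_lt (by omega)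
    set A := ∏ t ∈ Finset.range (i - 2), g ((t : ℕ) : Fin n) with hA
    set c := g (((i - 2 : ℕ) : Fin n)) with hc
    have hv1 : ((((i - 1 : ℕ) : Fin n) - 0 : Fin n)).val = i - 1 := by
      rw [sub_zero, hvi]
    have hTi1 : T (((i - 1 : ℕ) : Fin n)) 0 =
        (∏ t ∈ Finset.range (i - 1), g ((t : ℕ) : Fin n)) / (1 - P) := by
      rw [hT]
      simp only [Matrix.of_apply, hv1, zero_add]
      rfl
    have hsplit : ∏ t ∈ Finset.range (i - 1), g ((t : ℕ) : Fin n) = A * c := by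
      rw [show Finset.range (i - 1) = Finset.range ((i - 2) + 1) from by
        rw [show (i - 2) + 1 = i - 1 from by omega], Finset.prod_range_succ]
    have hA0 : A ≠ 0 := Finset.prod_ne_zero_iff.mpr fun t _ => hg _
    have hQ : Q (i - 1) = A := by
      show (∏ t ∈ Finset.range (i - 1 - 1), g ((t : ℕ) : Fin n)) = A
      rw [hA, show i - 1 - 1 = i - 2 from by omega]
    rw [hTi1, hQ, hsplit]
    field_simp
  · have hQ0 : Q n ≠ 0 := Finset.prod_ne_zero_iff.mpr fun t _ => hg _
    have hQn : Q n = ∏ t ∈ Finset.range (n - 1), g ((t : ℕ) : Fin n) := rfl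
    rw [hPn, hQn]
    rw [eq_div_iff (by rw [← hQn]; exact hQ0)]
    ring
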